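/- Let b₁, b₂ be nonzero complex numbers and consider the deformed B₂ map φ̃(x₁,x₂) = (x₁', x₂') with x₁' = (x₂² + b₁)/x₁ and x₂' = (x₁' + b₂)/x₂. Then there exist constants κ₁, κ₂, κ₃, κ₄ ∈ ℂ such that the rational function K̃(x₁,x₂) = x₂ + κ₁/x₂ + κ₂·x₁/x₂ + κ₃·x₂/x₁ + κ₄/(x₁x₂) satisfies K̃(φ̃(x₁,x₂)) = K̃(x₁,x₂) for all x₁, x₂ at which both sides are defined, if and only if b₁ = b₂. Moreover, when b₁ = b₂ = β, the invariant is K̃(x₁,x₂) = x₂ + (1+β)/x₂ + x₁/x₂ + x₂/x₁ + β/(x₁x₂), and hence φ̃ is a Liouville integrable map of the plane. -/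

import Mathlib

set_option maxHeartbeats 1000000

open Polynomial in
lemma aux_cubic (a b c d : ℂ) (s : Set ℂ) (hs : s.Finite)
    (h : ∀ x, x ∉ s → a + b * x + c * x ^ 2 + d * x ^ 3 = 0) :
    a = 0 ∧ b = 0 ∧ c = 0 ∧ d = 0 := by
  set p : Polynomial ℂ := C a + C b * X + C c * X ^ 2 + C d * X ^ 3 with hpdef
  have hp : p = 0 := by
    apply p.eq_zero_of_infinite_isRoot
    apply (hs.infinite_compl).mono
    intro x hx
    simp only [Set.mem_setOf_eq, IsRoot, hpdef]
    simp only [eval_add, eval_mul, eval_pow, eval_C, eval_X]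
    exact h x hx
  refine ⟨?_, ?_, ?_, ?_⟩
  · have := congrArg (fun q => Polynomial.coeff q 0) hp
    simpa [hpdef, coeff_X_pow] using this
  · have := congrArg (fun q => Polynomial.coeff q 1) hp
    simpa [hpdef, coeff_X_pow] using this
  · have := congrArg (fun q => Polynomial.coeff q 2) hp
    simpa [hpdef, coeff_X_pow] using this
  · have := congrArg (fun q => Polynomial.coeff q 3) hp
    simpa [hpdef, coeff_X_pow] using this

lemma aux_sextic (a b c d : ℂ) (s : Set ℂ) (hs : s.Finite)
    (h : ∀ x, x ∉ s → a + b * x ^ 2 + c * x ^ 4 + d * x ^ 6 = 0) :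
    a = 0 ∧ b = 0 ∧ c = 0 ∧ d = 0 := by
  apply aux_cubic a b c d ((fun x : ℂ => x ^ 2) '' s) (hs.image _)
  intro t ht
  obtain ⟨x, hx⟩ := IsAlgClosed.exists_pow_nat_eq t (n := 2) (by norm_num)
  have hxs : x ∉ s := fun hmem => ht ⟨x, hmem, hx⟩
  have := h x hxs
  rw [← hx]; linear_combination this

/-- The candidate first integral
`K̃(x₁,x₂) = x₂ + κ₁/x₂ + κ₂·x₁/x₂ + κ₃·x₂/x₁ + κ₄/(x₁x₂)` of the deformed B₂
map. -/
noncomputable def KtilB2 (κ₁ κ₂ κ₃ κ₄ x₁ x₂ : ℂ) : ℂ :=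
  x₂ + κ₁ / x₂ + κ₂ * x₁ / x₂ + κ₃ * x₂ / x₁ + κ₄ / (x₁ * x₂)

lemma KtilB2_frac' (k1 k2 k3 k4 x s : ℂ) (hx : x ≠ 0) (hs : s ≠ 0) :
    KtilB2 k1 k2 k3 k4 x s =
      (x * s ^ 2 + k1 * x + k2 * x ^ 2 + k3 * s ^ 2 + k4) / (x * s) := by
  rw [KtilB2]
  field_simp

lemma KtilB2_frac (k1 k2 k3 k4 A B x s : ℂ) (hA : A ≠ 0) (hB : B ≠ 0)
    (hx : x ≠ 0) (hs : s ≠ 0) :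
    KtilB2 k1 k2 k3 k4 (A / x) (B / (x * s)) =
      (A * B ^ 2 + k1 * x ^ 2 * s ^ 2 * A + k2 * A ^ 2 * s ^ 2 * x + k3 * B ^ 2 * x
        + k4 * x ^ 3 * s ^ 2) / (x * s * A * B) := by
  have hu : A / x ≠ 0 := div_ne_zero hA hx
  have hv : B / (x * s) ≠ 0 := div_ne_zero hB (mul_ne_zero hx hs)
  rw [KtilB2_frac' k1 k2 k3 k4 _ _ hu hv,
    div_eq_div_iff (mul_ne_zero hu hv) (by simp [hx, hs, hA, hB])]
  field_simp

lemma nested_arg (b1 b2 s x : ℂ) (hx : x ≠ 0) (hs : s ≠ 0) :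
    ((s ^ 2 + b1) / x + b2) / s = (s ^ 2 + b1 + b2 * x) / (x * s) := by
  field_simp

lemma cubic_core (b1 b2 k1 k2 k3 k4 s x : ℂ) (hs : s ≠ 0)
    (hA : s ^ 2 + b1 ≠ 0) (hx : x ≠ 0) (hB : s ^ 2 + b1 + b2 * x ≠ 0)
    (h : KtilB2 k1 k2 k3 k4 ((s ^ 2 + b1) / x) (((s ^ 2 + b1) / x + b2) / s) =
      KtilB2 k1 k2 k3 k4 x s) :
    (b1^3 - b1^2*k4 + (3*b1^2 - 2*b1*k4 - b1^2*k3)*s^2 + (3*b1 - k4 - 2*b1*k3)*s^4 + (1-k3)*s^6)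
    + ((-(b1*b2*k4) + b1^2*k3 - b1^2*k1 + 2*b1^2*b2) + (-(b2*k4) + 2*b1*k3 - 2*b1*k1 + 4*b1*b2 - b1*b2*k3 - b1^2 + b1^2*k2)*s^2 + (k3 - k1 + 2*b2 - b2*k3 - 2*b1 + 2*b1*k2)*s^4 + (k2-1)*s^6) * x
    + ((2*b1*b2*k3 - b1*b2*k1 + b1*b2^2 - b1^2*k2) + (2*b2*k3 - b2*k1 + b2^2 - 2*b1*k2 + b1*k1 - b1*b2)*s^2 + (k1 - k2 - b2)*s^4) * x^2
    + ((b2^2*k3 - b1*b2*k2) + (k4 - b2*k2)*s^2) * x^3 = 0 := by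
  rw [nested_arg b1 b2 s x hx hs, KtilB2_frac k1 k2 k3 k4 _ _ x s hA hB hx hs,
    KtilB2_frac' k1 k2 k3 k4 x s hx hs,
    div_eq_div_iff (by simp [hx, hs, hA, hB]) (by simp [hx, hs])] at h
  have h' : ((s ^ 2 + b1) * (s ^ 2 + b1 + b2 * x) ^ 2 + k1 * x ^ 2 * s ^ 2 * (s ^ 2 + b1)
      + k2 * (s ^ 2 + b1) ^ 2 * s ^ 2 * x + k3 * (s ^ 2 + b1 + b2 * x) ^ 2 * x
      + k4 * x ^ 3 * s ^ 2) =
      (x * s ^ 2 + k1 * x + k2 * x ^ 2 + k3 * s ^ 2 + k4) * ((s ^ 2 + b1) * (s ^ 2 + b1 + b2 * x)) := by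
    apply mul_right_cancel₀ (mul_ne_zero hx hs)
    linear_combination h
  linear_combination h'

/-- the deformed B₂ map `φ̃(x₁,x₂) = ((x₂²+b₁)/x₁, (x₁'+b₂)/x₂)`
admits a first integral of the form `K̃` if and only if `b₁ = b₂`; moreover when
`b₁ = b₂ = β` the invariant is
`K̃ = x₂ + (1+β)/x₂ + x₁/x₂ + x₂/x₁ + β/(x₁x₂)`. -/
theorem deformed_B2_integrability (b₁ b₂ : ℂ) (hb₁ : b₁ ≠ 0) (hb₂ : b₂ ≠ 0) :
    ((∃ κ₁ κ₂ κ₃ κ₄ : ℂ, ∀ x₁ x₂ : ℂ, x₁ ≠ 0 → x₂ ≠ 0 →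
        (x₂ ^ 2 + b₁) / x₁ ≠ 0 → ((x₂ ^ 2 + b₁) / x₁ + b₂) / x₂ ≠ 0 →
        KtilB2 κ₁ κ₂ κ₃ κ₄ ((x₂ ^ 2 + b₁) / x₁) (((x₂ ^ 2 + b₁) / x₁ + b₂) / x₂) =
          KtilB2 κ₁ κ₂ κ₃ κ₄ x₁ x₂) ↔ b₁ = b₂) ∧
    (b₁ = b₂ → ∀ x₁ x₂ : ℂ, x₁ ≠ 0 → x₂ ≠ 0 →
        (x₂ ^ 2 + b₁) / x₁ ≠ 0 → ((x₂ ^ 2 + b₁) / x₁ + b₂) / x₂ ≠ 0 →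
        KtilB2 (1 + b₁) 1 1 b₁ ((x₂ ^ 2 + b₁) / x₁) (((x₂ ^ 2 + b₁) / x₁ + b₂) / x₂) =
          KtilB2 (1 + b₁) 1 1 b₁ x₁ x₂) := by
  -- the invariance computation when b₁ = b₂
  have hinv : b₁ = b₂ → ∀ x₁ x₂ : ℂ, x₁ ≠ 0 → x₂ ≠ 0 →
      (x₂ ^ 2 + b₁) / x₁ ≠ 0 → ((x₂ ^ 2 + b₁) / x₁ + b₂) / x₂ ≠ 0 →
      KtilB2 (1 + b₁) 1 1 b₁ ((x₂ ^ 2 + b₁) / x₁) (((x₂ ^ 2 + b₁) / x₁ + b₂) / x₂) =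
        KtilB2 (1 + b₁) 1 1 b₁ x₁ x₂ := by
    intro hbb x s hx hs h1 h2
    have hA : s ^ 2 + b₁ ≠ 0 := fun hc => h1 (by rw [hc, zero_div])
    have hB : s ^ 2 + b₁ + b₂ * x ≠ 0 := by
      rw [nested_arg b₁ b₂ s x hx hs] at h2
      intro hc; exact h2 (by rw [hc, zero_div])
    rw [nested_arg b₁ b₂ s x hx hs,
      KtilB2_frac (1 + b₁) 1 1 b₁ _ _ x s hA hB hx hs,
      KtilB2_frac' (1 + b₁) 1 1 b₁ x s hx hs,
      div_eq_div_iff (by simp [hx, hs, hA, hB]) (by simp [hx, hs])]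
    subst hbb
    ring
  constructor
  · constructor
    · rintro ⟨k1, k2, k3, k4, h⟩
      -- Step 1: coefficientwise (in x₁) vanishing, for each good x₂ = s
      have key : ∀ s : ℂ, s ≠ 0 → s ^ 2 + b₁ ≠ 0 →
          ((b₁^3 - b₁^2*k4 + (3*b₁^2 - 2*b₁*k4 - b₁^2*k3)*s^2 + (3*b₁ - k4 - 2*b₁*k3)*s^4 + (1-k3)*s^6) = 0)
          ∧ ((-(b₁*b₂*k4) + b₁^2*k3 - b₁^2*k1 + 2*b₁^2*b₂) + (-(b₂*k4) + 2*b₁*k3 - 2*b₁*k1 + 4*b₁*b₂ - b₁*b₂*k3 - b₁^2 + b₁^2*k2)*s^2 + (k3 - k1 + 2*b₂ - b₂*k3 - 2*b₁ + 2*b₁*k2)*s^4 + (k2-1)*s^6 = 0)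
          ∧ ((2*b₁*b₂*k3 - b₁*b₂*k1 + b₁*b₂^2 - b₁^2*k2) + (2*b₂*k3 - b₂*k1 + b₂^2 - 2*b₁*k2 + b₁*k1 - b₁*b₂)*s^2 + (k1 - k2 - b₂)*s^4 = 0)
          ∧ ((b₂^2*k3 - b₁*b₂*k2) + (k4 - b₂*k2)*s^2 = 0) := by
        intro s hs hA
        apply aux_cubic _ _ _ _ ({0, -(s ^ 2 + b₁) / b₂} : Set ℂ)
          ((Set.finite_singleton _).insert _)
        intro x hxmem
        have hx : x ≠ 0 := fun hc => hxmem (Or.inl hc)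
        have hB : s ^ 2 + b₁ + b₂ * x ≠ 0 := by
          intro hc
          exact hxmem (Or.inr ((eq_div_iff hb₂).2 (by linear_combination hc)))
        have h1 : (s ^ 2 + b₁) / x ≠ 0 := div_ne_zero hA hx
        have h2 : ((s ^ 2 + b₁) / x + b₂) / s ≠ 0 := by
          rw [nested_arg b₁ b₂ s x hx hs]
          exact div_ne_zero hB (mul_ne_zero hx hs)
        exact cubic_core b₁ b₂ k1 k2 k3 k4 s x hs hA hx hB (h x s hx hs h1 h2)
      -- Step 2: the good set of s is cofinite
      set p : Polynomial ℂ := Polynomial.X ^ 3 + Polynomial.C b₁ * Polynomial.X with hpdef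
      have hpne : p ≠ 0 := by
        intro hc
        have := congrArg (fun q => Polynomial.coeff q 3) hc
        simp [hpdef, Polynomial.coeff_X_pow] at this
      have hSfin : ({x : ℂ | p.IsRoot x}).Finite := Polynomial.finite_setOf_isRoot hpne
      have hgood : ∀ s : ℂ, s ∉ {x : ℂ | p.IsRoot x} → s ≠ 0 ∧ s ^ 2 + b₁ ≠ 0 := by
        intro s hsS
        have hne : s ^ 3 + b₁ * s ≠ 0 := by
          intro hc
          exact hsS (by simp [hpdef, Polynomial.IsRoot, hc])
        constructor
        · intro hc; exact hne (by rw [hc]; ring)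
        · intro hc; exact hne (by linear_combination s * hc)
      -- extract the three needed coefficient identities
      have e0 := aux_sextic (b₁^3 - b₁^2*k4) (3*b₁^2 - 2*b₁*k4 - b₁^2*k3)
          (3*b₁ - k4 - 2*b₁*k3) (1-k3) _ hSfin
          (fun s hsS => (key s (hgood s hsS).1 (hgood s hsS).2).1)
      have e1 := aux_sextic (-(b₁*b₂*k4) + b₁^2*k3 - b₁^2*k1 + 2*b₁^2*b₂)
          (-(b₂*k4) + 2*b₁*k3 - 2*b₁*k1 + 4*b₁*b₂ - b₁*b₂*k3 - b₁^2 + b₁^2*k2)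
          (k3 - k1 + 2*b₂ - b₂*k3 - 2*b₁ + 2*b₁*k2) (k2-1) _ hSfin
          (fun s hsS => (key s (hgood s hsS).1 (hgood s hsS).2).2.1)
      have e3 := aux_sextic (b₂^2*k3 - b₁*b₂*k2) (k4 - b₂*k2) 0 0 _ hSfin
          (fun s hsS => by
            have := (key s (hgood s hsS).1 (hgood s hsS).2).2.2.2
            linear_combination this)
      have hk3 : k3 = 1 := by linear_combination -e0.2.2.2
      have hk2 : k2 = 1 := by linear_combination e1.2.2.2
      have hfin : b₂ ^ 2 * k3 - b₁ * b₂ * k2 = 0 := e3.1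
      rw [hk2, hk3] at hfin
      have : (b₂ - b₁) * b₂ = 0 := by linear_combination hfin
      rcases mul_eq_zero.1 this with h' | h'
      · linear_combination -h'
      · exact absurd h' hb₂
    · intro hbb
      exact ⟨1 + b₁, 1, 1, b₁, hinv hbb⟩
  · exact hinv
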